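/- For integers d ≥ 2 and k ≥ 2, the minimum eigenvalue of A_k is strictly less than -(2√(d-1)/d)·cos(π/(k+1)). -/

import Mathlib

open Real Matrix

private lemma trig_sum' (θ : ℝ) (n : ℕ) :
    ∑ m ∈ Finset.range n,
      (Real.sin ((m+1)*θ) * Real.sin ((m+2)*θ) - Real.cos θ * Real.sin ((m+1)*θ)^2)
    = Real.sin (n*θ) * Real.sin ((n+1)*θ) / 2 := by
  induction n with
  | zero => simp
  | succ n ih =>
    rw [Finset.sum_range_succ, ih]
    push_cast
    have h0 : Real.sin ((n:ℝ)*θ) = Real.sin ((n:ℝ)*θ+θ) * Real.cos θ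
        - Real.cos ((n:ℝ)*θ+θ) * Real.sin θ := by
      have := Real.sin_sub ((n:ℝ)*θ+θ) θ
      rw [show (n:ℝ)*θ + θ - θ = (n:ℝ)*θ by ring] at this
      exact this
    have h2 : Real.sin ((n:ℝ)*θ+θ*2) = Real.sin ((n:ℝ)*θ+θ) * Real.cos θ
        + Real.cos ((n:ℝ)*θ+θ) * Real.sin θ := by
      have := Real.sin_add ((n:ℝ)*θ+θ) θ
      rw [show (n:ℝ)*θ + θ + θ = (n:ℝ)*θ+θ*2 by ring] at this
      exact this
    ring_nf
    rw [h0, h2]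
    ring

private lemma trig_id' (k : ℕ) (hk : 2 ≤ k) :
    ∑ m ∈ Finset.range (k-1), Real.sin ((m+1)*(π/(k+1))) * Real.sin ((m+2)*(π/(k+1)))
    = Real.cos (π/(k+1)) * ∑ m ∈ Finset.range k, Real.sin ((m+1)*(π/(k+1)))^2 := by
  set θ := π/((k:ℝ)+1) with hθ
  have hk1 : (0:ℝ) < (k:ℝ)+1 := by positivity
  have hcast : ((k-1 : ℕ) : ℝ) = (k:ℝ) - 1 := by
    rw [Nat.cast_sub (by omega)]; norm_num
  have hts := trig_sum' θ (k-1)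
  rw [hcast] at hts
  have hkθ : (k:ℝ)*θ = π - θ := by
    rw [hθ]; field_simp; ring
  have h1 : Real.sin (((k:ℝ)-1+1)*θ) = Real.sin θ := by
    rw [show ((k:ℝ)-1+1)*θ = π - θ by rw [← hkθ]; ring, Real.sin_pi_sub]
  have h2 : Real.sin (((k:ℝ)-1)*θ) = 2 * Real.sin θ * Real.cos θ := by
    have e : ((k:ℝ)-1)*θ = π - 2*θ := by
      have : ((k:ℝ)-1)*θ = (k:ℝ)*θ - θ := by ring
      rw [this, hkθ]; ring
    rw [e, Real.sin_pi_sub, Real.sin_two_mul]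
  rw [h1, h2] at hts
  rw [Finset.sum_sub_distrib, ← Finset.mul_sum] at hts
  have hsplit := Finset.sum_range_succ (fun m : ℕ => Real.sin ((m+1)*θ)^2) (k-1)
  rw [show k-1+1 = k by omega, hcast] at hsplit
  rw [hsplit, h1]
  nlinarith [hts]

private lemma rayleigh_lower' {n : Type*} [Fintype n] [DecidableEq n] [Nonempty n]
    {A : Matrix n n ℝ} (hA : A.IsHermitian) (v : n → ℝ) :
    (⨅ i, hA.eigenvalues i) * (v ⬝ᵥ v) ≤ v ⬝ᵥ A *ᵥ v := by
  set μ := ⨅ i, hA.eigenvalues i with hμ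
  have hb : ∀ i, μ ≤ hA.eigenvalues i := fun i => ciInf_le (Finite.bddBelow_range _) i
  have hU : (hA.eigenvectorUnitary : Matrix n n ℝ) * star (hA.eigenvectorUnitary : Matrix n n ℝ) = 1 :=
    (Matrix.mem_unitaryGroup_iff).mp hA.eigenvectorUnitary.2
  have h1 : (A - μ • (1:Matrix n n ℝ)) =
      (hA.eigenvectorUnitary : Matrix n n ℝ) * Matrix.diagonal (fun i => hA.eigenvalues i - μ) *
        star (hA.eigenvectorUnitary : Matrix n n ℝ) := by
    have hd : Matrix.diagonal (fun i => hA.eigenvalues i - μ) =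
        Matrix.diagonal (RCLike.ofReal ∘ hA.eigenvalues) - μ • (1:Matrix n n ℝ) := by
      ext i j
      by_cases h : i = j <;> simp [Matrix.diagonal, Matrix.one_apply, h]
    rw [hd, Matrix.mul_sub, Matrix.sub_mul, ← Unitary.conjStarAlgAut_apply (S := ℝ) hA.eigenvectorUnitary
      (Matrix.diagonal (RCLike.ofReal ∘ hA.eigenvalues)), ← hA.spectral_theorem]
    congr 1
    rw [Matrix.mul_smul, Matrix.mul_one, Matrix.smul_mul, hU]
  have hps : (A - μ • (1:Matrix n n ℝ)).PosSemidef := by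
    rw [h1]
    exact Matrix.PosSemidef.mul_mul_conjTranspose_same
      (Matrix.PosSemidef.diagonal (fun i => sub_nonneg.2 (hb i))) _
  have h2 := hps.dotProduct_mulVec_nonneg v
  simp only [Matrix.sub_mulVec, Matrix.smul_mulVec, Matrix.one_mulVec,
    dotProduct_sub, dotProduct_smul, star_trivial, smul_eq_mul] at h2
  linarith

private lemma double_fin_sum' {k : ℕ} (F : ℕ → ℕ → ℝ) :
    ∑ i : Fin k, ∑ j : Fin k, F i j = ∑ i ∈ Finset.range k, ∑ j ∈ Finset.range k, F i j := by
  rw [← Fin.sum_univ_eq_sum_range (fun i => ∑ j ∈ Finset.range k, F i j)]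
  exact Finset.sum_congr rfl fun i _ => Fin.sum_univ_eq_sum_range (fun j => F i j) k

private lemma key_sum' {k : ℕ} (hk : 2 ≤ k) (g : ℕ → ℕ → ℝ) :
    (∑ i ∈ Finset.range k, ∑ j ∈ Finset.range k, (if i + 1 = j then g i j else 0))
    = ∑ m ∈ Finset.range (k-1), g m (m+1) := by
  have inner : ∀ i, (∑ j ∈ Finset.range k, if i + 1 = j then g i j else 0)
      = if i + 1 ∈ Finset.range k then g i (i+1) else 0 :=
    fun i => Finset.sum_ite_eq (Finset.range k) (i+1) (g i)
  simp only [inner]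
  have cond : ∀ i : ℕ, ((i+1) ∈ Finset.range k) = (i ∈ Finset.range (k-1)) := by
    intro i
    simp only [Finset.mem_range]
    exact propext ⟨fun h => by omega, fun h => by omega⟩
  simp only [cond]
  rw [Finset.sum_ite_mem]
  congr 1
  exact Finset.inter_eq_right.mpr (Finset.range_subset_range.mpr (by omega))

private lemma quad_form' (k : ℕ) (hk : 2 ≤ k) (p q : ℝ) (w : ℕ → ℝ)
    (A : Matrix (Fin k) (Fin k) ℝ)
    (hA : A = Matrix.of fun i j : Fin k =>
      if (i : ℕ) + 1 = j ∨ (j : ℕ) + 1 = i then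
        (if (i : ℕ) + (j : ℕ) = 1 then p else q)
      else 0) :
    (fun i : Fin k => w i) ⬝ᵥ A *ᵥ (fun i : Fin k => w i)
      = 2 * ∑ m ∈ Finset.range (k-1), (if m = 0 then p else q) * (w m * w (m+1)) := by
  have step1 : (fun i : Fin k => w i) ⬝ᵥ A *ᵥ (fun i : Fin k => w i)
      = ∑ i ∈ Finset.range k, ∑ j ∈ Finset.range k,
        (if i + 1 = j ∨ j + 1 = i then (if i + j = 1 then p else q) else 0) * (w i * w j) := by
    rw [hA, ← double_fin_sum' (fun i j =>
        (if i + 1 = j ∨ j + 1 = i then (if i + j = 1 then p else q) else 0) * (w i * w j))]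
    simp only [dotProduct, Matrix.mulVec, Matrix.of_apply, Finset.mul_sum]
    exact Finset.sum_congr rfl fun i _ => Finset.sum_congr rfl fun j _ => by ring
  rw [step1]
  have split : ∀ i j : ℕ,
      (if i + 1 = j ∨ j + 1 = i then (if i + j = 1 then p else q) else 0) * (w i * w j)
      = (if i + 1 = j then (if i + j = 1 then p else q) * (w i * w j) else 0)
        + (if j + 1 = i then (if i + j = 1 then p else q) * (w i * w j) else 0) := by
    intro i j
    by_cases h1 : i + 1 = j <;> by_cases h2 : j + 1 = i
    · omega
    · simp [h1, h2]
    · simp [h1, h2]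
    · simp [h1, h2]
  simp only [split, Finset.sum_add_distrib]
  rw [key_sum' hk (fun i j => (if i + j = 1 then p else q) * (w i * w j))]
  rw [Finset.sum_comm (s := Finset.range k) (t := Finset.range k)
    (f := fun i j => if j + 1 = i then (if i + j = 1 then p else q) * (w i * w j) else 0)]
  rw [key_sum' hk (fun j i => (if i + j = 1 then p else q) * (w i * w j))]
  rw [Finset.mul_sum, ← Finset.sum_add_distrib]
  refine Finset.sum_congr rfl fun m _ => ?_
  simp only [show (m + (m+1) = 1) ↔ (m = 0) by omega, show ((m+1) + m = 1) ↔ (m = 0) by omega]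
  ring

theorem minEig_Ak_strict_bound (k d : ℕ) (hk : 2 ≤ k) (hd : 2 ≤ d)
    (A : Matrix (Fin k) (Fin k) ℝ)
    (hA : A = Matrix.of fun i j : Fin k =>
      if (i : ℕ) + 1 = j ∨ (j : ℕ) + 1 = i then
        (if (i : ℕ) + (j : ℕ) = 1 then 1 / Real.sqrt d else Real.sqrt (d - 1) / d)
      else 0)
    (hH : A.IsHermitian) :
    haveI : Nonempty (Fin k) := ⟨⟨0, by omega⟩⟩
    (⨅ i, hH.eigenvalues i) < -(2 * Real.sqrt (d - 1) / d) * Real.cos (π / (k + 1)) := by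
  haveI : Nonempty (Fin k) := ⟨⟨0, by omega⟩⟩
  set θ := π/((k:ℝ)+1) with hθ
  set c : ℝ := Real.sqrt ((d:ℝ) - 1) / d with hc
  set p : ℝ := 1 / Real.sqrt d with hp
  set w : ℕ → ℝ := fun m => (-1:ℝ)^m * Real.sin ((m+1)*θ) with hw
  set v : Fin k → ℝ := fun i => w i with hv
  -- basic positivity facts
  have hdR : (2:ℝ) ≤ (d:ℝ) := by exact_mod_cast hd
  have hθpos : 0 < θ := by rw [hθ]; positivity
  have hθlt : θ < π / 2 := by
    rw [hθ]
    apply div_lt_div_of_pos_left pi_pos (by norm_num)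
    have : (2:ℝ) ≤ (k:ℝ) := by exact_mod_cast hk
    linarith
  have hsinθ : 0 < Real.sin θ := Real.sin_pos_of_pos_of_lt_pi hθpos (by linarith [pi_pos])
  have hsin2θ : 0 < Real.sin (2*θ) :=
    Real.sin_pos_of_pos_of_lt_pi (by linarith) (by linarith)
  -- c < p
  have hcp : c < p := by
    rw [hc, hp, ← Real.sqrt_div_self']
    have hd0 : (0:ℝ) < d := by linarith
    exact div_lt_div_of_pos_right (Real.sqrt_lt_sqrt (by linarith) (by linarith)) hd0
  -- quadratic form value
  have hQ := quad_form' k hk p c w A hA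
  have hsplit : ∑ m ∈ Finset.range (k-1), (if m = 0 then p else c) * (w m * w (m+1))
      = c * (∑ m ∈ Finset.range (k-1), w m * w (m+1)) + (p - c) * (w 0 * w 1) := by
    rw [Finset.mul_sum]
    rw [show k-1 = (k-2)+1 by omega]
    rw [Finset.sum_range_succ' (fun m => (if m = 0 then p else c) * (w m * w (m+1))) (k-2),
        Finset.sum_range_succ' (fun m => c * (w m * w (m+1))) (k-2)]
    have e : ∀ x : ℕ, (if x + 1 = 0 then p else c) = c := fun x => if_neg (by omega)
    simp only [e, if_pos rfl, if_true]
    ring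
  have hww : ∀ m : ℕ, w m * w (m+1) = -(Real.sin ((m+1)*θ) * Real.sin ((m+2)*θ)) := by
    intro m
    have hpar : (-1:ℝ)^m * (-1:ℝ)^(m+1) = -1 := by
      rcases Nat.even_or_odd m with h | h
      · rw [h.neg_one_pow, (h.add_one).neg_one_pow]; ring
      · rw [h.neg_one_pow, (h.add_one).neg_one_pow]; ring
    simp only [hw]
    push_cast
    rw [show ((m:ℝ)+1+1)*θ = ((m:ℝ)+2)*θ by ring]
    calc (-1:ℝ)^m * Real.sin (((m:ℝ)+1)*θ) * ((-1:ℝ)^(m+1) * Real.sin (((m:ℝ)+2)*θ))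
        = ((-1:ℝ)^m * (-1:ℝ)^(m+1)) * (Real.sin (((m:ℝ)+1)*θ) * Real.sin (((m:ℝ)+2)*θ)) := by
          ring
      _ = -(Real.sin (((m:ℝ)+1)*θ) * Real.sin (((m:ℝ)+2)*θ)) := by rw [hpar]; ring
  have hN : v ⬝ᵥ v = ∑ m ∈ Finset.range k, Real.sin ((m+1)*θ)^2 := by
    have hterm : ∀ m : ℕ, w m * w m = Real.sin ((m+1)*θ)^2 := by
      intro m
      simp only [hw]
      rw [show (-1:ℝ)^m * Real.sin (((m:ℝ)+1)*θ) * ((-1:ℝ)^m * Real.sin (((m:ℝ)+1)*θ))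
        = ((-1:ℝ)^m)^2 * Real.sin (((m:ℝ)+1)*θ)^2 by ring]
      rw [← pow_mul, mul_comm m 2, pow_mul, neg_one_sq, one_pow, one_mul]
    show (∑ i : Fin k, w i * w i) = _
    rw [Fin.sum_univ_eq_sum_range (fun m => w m * w m)]
    exact Finset.sum_congr rfl fun m _ => hterm m
  have hNpos : 0 < ∑ m ∈ Finset.range k, Real.sin ((m+1)*θ)^2 := by
    apply Finset.sum_pos' (fun m _ => sq_nonneg _)
    refine ⟨0, Finset.mem_range.mpr (by omega), ?_⟩
    have h0 : (((0:ℕ):ℝ)+1)*θ = θ := by norm_num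
    rw [h0]
    exact pow_pos hsinθ 2
  have htrig := trig_id' k hk
  rw [← hθ] at htrig
  -- compute sum of products
  have hprod : ∑ m ∈ Finset.range (k-1), w m * w (m+1)
      = -(Real.cos θ * ∑ m ∈ Finset.range k, Real.sin ((m+1)*θ)^2) := by
    rw [← htrig, ← Finset.sum_neg_distrib]
    exact Finset.sum_congr rfl fun m _ => hww m
  have hw01 : w 0 * w 1 = -(Real.sin θ * Real.sin (2*θ)) := by
    rw [hww 0]
    norm_num [mul_comm]
  -- assemble
  set N := ∑ m ∈ Finset.range k, Real.sin ((m+1)*θ)^2 with hNdef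
  have hQv : v ⬝ᵥ A *ᵥ v
      = (-(2*c) * Real.cos θ) * N - 2*(p-c)*(Real.sin θ * Real.sin (2*θ)) := by
    rw [hQ, hsplit, hprod, hw01]
    ring
  have hray := rayleigh_lower' hH v
  rw [hN, hQv] at hray
  have hpos : 0 < (p - c) * (Real.sin θ * Real.sin (2*θ)) :=
    mul_pos (sub_pos.2 hcp) (mul_pos hsinθ hsin2θ)
  have hlt : (⨅ i, hH.eigenvalues i) * N < (-(2*c) * Real.cos θ) * N := by
    calc (⨅ i, hH.eigenvalues i) * N
        ≤ (-(2*c) * Real.cos θ) * N - 2*(p-c)*(Real.sin θ * Real.sin (2*θ)) := hray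
      _ < (-(2*c) * Real.cos θ) * N := by linarith
  have hfin := lt_of_mul_lt_mul_right hlt hNpos.le
  have : -(2 * Real.sqrt ((d:ℝ) - 1) / (d:ℝ)) * Real.cos (π / ((k:ℝ) + 1))
      = -(2*c) * Real.cos θ := by
    rw [hc, hθ]; ring
  rw [this]
  exact hfin
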